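/- Let I = [a, b] be a compact interval, let r > 0, let 0 < δ < 1 and B > 0, and let f : I → ℝ be differentiable with |f′(x)| ≤ r for all x ∈ I. Suppose that for every α > 0 and every c ∈ ℝ, the Lebesgue measure of {x ∈ I : |f(x) − c| ≤ α} is at most B α^δ. Then the length of I satisfies |I| ≤ (B / 2^δ)^{1/(1−δ)} · r^{δ/(1−δ)}. -/
import Mathlib


open MeasureTheory

/-- Let `I = [a, b]`, `r > 0`, `0 < δ < 1`, `B > 0`, and let
`f : I → ℝ` be differentiable with `|f'| ≤ r` on `I`. If for every `α > 0` and `c ∈ ℝ`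
the Lebesgue measure of `{x ∈ I : |f x - c| ≤ α}` is at most `B α^δ`, then
`|I| = b - a ≤ (B / 2^δ)^{1/(1-δ)} · r^{δ/(1-δ)}`. -/
theorem stmt_12 (a b r δ B : ℝ) (hab : a ≤ b) (hr : 0 < r)
    (hδ0 : 0 < δ) (hδ1 : δ < 1) (hB : 0 < B) (f f' : ℝ → ℝ)
    (hderiv : ∀ x ∈ Set.Icc a b, HasDerivWithinAt f (f' x) (Set.Icc a b) x)
    (hbound : ∀ x ∈ Set.Icc a b, |f' x| ≤ r)
    (hsub : ∀ α : ℝ, 0 < α → ∀ c : ℝ,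
      (volume {x ∈ Set.Icc a b | |f x - c| ≤ α}).toReal ≤ B * α ^ δ) :
    b - a ≤ (B / 2 ^ δ) ^ (1 / (1 - δ)) * r ^ (δ / (1 - δ)) := by
  set L := b - a with hLdef
  have h1δ : (0:ℝ) < 1 - δ := by linarith
  rcases eq_or_lt_of_le hab with h | hlt
  · have : L = 0 := by simp [hLdef, ← h]
    rw [this]
    positivity
  have hL : 0 < L := by simp [hLdef]; linarith
  -- Lipschitz estimate
  have hlip : ∀ x ∈ Set.Icc a b, ∀ y ∈ Set.Icc a b, |f x - f y| ≤ r * |x - y| := by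
    intro x hx y hy
    have := (convex_Icc a b).norm_image_sub_le_of_norm_hasDerivWithin_le
      hderiv (fun z hz => by simpa [Real.norm_eq_abs] using hbound z hz) hy hx
    simpa [Real.norm_eq_abs] using this
  set m := (a + b) / 2 with hm
  have hmI : m ∈ Set.Icc a b := by constructor <;> (simp [hm]; linarith)
  set α := r * L / 2 with hα
  have hαpos : 0 < α := by positivity
  have hset : {x ∈ Set.Icc a b | |f x - f m| ≤ α} = Set.Icc a b := by
    ext x
    simp only [Set.mem_setOf_eq, Set.mem_Icc, and_iff_left_iff_imp]
    intro hx
    have h1 := hlip x ⟨hx.1, hx.2⟩ m hmI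
    have h2 : |x - m| ≤ L / 2 := by
      rw [abs_le]; constructor <;> (simp [hm, hLdef]; linarith [hx.1, hx.2])
    calc |f x - f m| ≤ r * |x - m| := h1
      _ ≤ r * (L / 2) := by nlinarith
      _ = α := by rw [hα]; ring
  have hkey : L ≤ B * α ^ δ := by
    have := hsub α hαpos (f m)
    rwa [hset, Real.volume_Icc, ENNReal.toReal_ofReal (by linarith)] at this
  -- algebra
  have hαδ : α ^ δ = (r / 2) ^ δ * L ^ δ := by
    rw [hα, show r * L / 2 = (r / 2) * L by ring,
      Real.mul_rpow (by positivity) hL.le]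
  have h2 : L ^ (1 - δ) ≤ B * (r / 2) ^ δ := by
    rw [Real.rpow_sub hL, Real.rpow_one, div_le_iff₀ (Real.rpow_pos_of_pos hL δ)]
    calc L ≤ B * α ^ δ := hkey
      _ = B * (r / 2) ^ δ * L ^ δ := by rw [hαδ]; ring
  have h3 : L ≤ (B * (r / 2) ^ δ) ^ (1 / (1 - δ)) := by
    have := Real.rpow_le_rpow (Real.rpow_nonneg hL.le _) h2 (by positivity : (0:ℝ) ≤ 1 / (1 - δ))
    rwa [← Real.rpow_mul hL.le, mul_one_div_cancel (ne_of_gt h1δ), Real.rpow_one] at this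
  calc L ≤ (B * (r / 2) ^ δ) ^ (1 / (1 - δ)) := h3
    _ = (B / 2 ^ δ) ^ (1 / (1 - δ)) * r ^ (δ / (1 - δ)) := by
        rw [Real.div_rpow hr.le (by norm_num : (0:ℝ) ≤ 2),
          show B * (r ^ δ / 2 ^ δ) = (B / 2 ^ δ) * r ^ δ by ring,
          Real.mul_rpow (by positivity) (by positivity),
          ← Real.rpow_mul hr.le]
        ring_nf
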